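/- Let O_1 be the top-down odometer on finite words (O_1(w_1, …, w_j) = (1,…,1 (w_1−1 times), w_2+1, …, w_j) for j > 1, and O_1(w_1) = (1,…,1) ((w_1+1) times)). Then for every ω ∈ Ω_1, 2^{s(O_1(ω))−1} + n_{O_1(ω)} = 2^{s(ω)−1} + n_ω + 1. -/
import Mathlib


/-- To a finite word `ω = (w₁, …, w_j)` (a list, head = `w₁`) associate the
nonnegative integer `n_ω` whose binary expansion is the concatenation of the
blocks `b̂_{w_j−1} b̂_{w_{j−1}−1} ⋯ b̂_{w_1−1}`, where `b̂_k` is a `0` followed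
by `k` ones. -/
def wordVal (ω : List ℕ) : ℕ :=
  ω.reverse.foldl (fun v w => v * 2 ^ w + (2 ^ (w - 1) - 1)) 0

/-- The top-down odometer on finite words. -/
def topDownOdometer : List ℕ → List ℕ
  | [] => []
  | [w] => List.replicate (w + 1) 1
  | w₁ :: w₂ :: rest => List.replicate (w₁ - 1) 1 ++ (w₂ + 1) :: rest

lemma wordVal_cons (w : ℕ) (t : List ℕ) :
    wordVal (w :: t) = wordVal t * 2 ^ w + (2 ^ (w - 1) - 1) := by
  simp [wordVal, List.foldl_append]

lemma wordVal_replicate_one (k : ℕ) (t : List ℕ) :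
    wordVal (List.replicate k 1 ++ t) = 2 ^ k * wordVal t := by
  induction k with
  | zero => simp
  | succ n ih =>
      rw [List.replicate_succ, List.cons_append, wordVal_cons, ih]
      ring_nf

/-- The top-down odometer is a `+1` adding machine:
`2^{s(O₁(ω))−1} + n_{O₁(ω)} = 2^{s(ω)−1} + n_ω + 1`. -/
theorem topDownOdometer_adds_one (ω : List ℕ) (hne : ω ≠ []) (hω : ∀ x ∈ ω, 1 ≤ x) :
    2 ^ ((topDownOdometer ω).sum - 1) + wordVal (topDownOdometer ω) =
      2 ^ (ω.sum - 1) + wordVal ω + 1 := by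
  match ω with
  | [] => exact absurd rfl hne
  | [w] =>
      obtain ⟨a, rfl⟩ : ∃ a, w = a + 1 := ⟨w - 1, by have := hω w (by simp); omega⟩
      show 2 ^ ((List.replicate (a + 1 + 1) 1).sum - 1) + wordVal (List.replicate (a+1+1) 1)
          = _
      rw [show List.replicate (a+1+1) 1 = List.replicate (a+1+1) 1 ++ [] by simp,
        wordVal_replicate_one]
      simp [wordVal_cons, wordVal, List.sum_replicate]
      have h1 : (1:ℕ) ≤ 2 ^ a := Nat.one_le_two_pow
      rw [pow_succ]
      omega
  | w₁ :: w₂ :: rest =>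
      obtain ⟨a, rfl⟩ : ∃ a, w₁ = a + 1 := ⟨w₁ - 1, by have := hω w₁ (by simp); omega⟩
      obtain ⟨b, rfl⟩ : ∃ b, w₂ = b + 1 := ⟨w₂ - 1, by have := hω (w₂) (by simp); omega⟩
      show 2 ^ ((List.replicate (a+1-1) 1 ++ (b+1+1) :: rest).sum - 1)
            + wordVal (List.replicate (a+1-1) 1 ++ (b+1+1) :: rest) = _
      rw [wordVal_replicate_one]
      simp [wordVal_cons, List.sum_replicate, List.sum_append]
      set v := wordVal rest
      set r := rest.sum
      rw [show a + (b + 1 + 1 + r) - 1 = a + b + r + 1 by omega,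
        show a + (b + 1 + r) = a + b + r + 1 by omega]
      have h1 : (1:ℕ) ≤ 2 ^ a := Nat.one_le_two_pow
      have h2 : (1:ℕ) ≤ 2 ^ b := Nat.one_le_two_pow
      have h3 : (1:ℕ) ≤ 2 ^ (b+1) := Nat.one_le_two_pow
      zify [h1, h2, h3]
      ring
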